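/- Let μ be a probability measure on ℝ^d, let t > 0, let R > 0 be such that a := μ({z : ‖z‖ ≤ R}) > 0, and let φ_t be the density of N(0, tI_d). Define D(x) = ∫ φ_t(x−z) dμ(z). Then for all x, z ∈ ℝ^d with ‖z‖ > 4(‖x‖ + R), one has φ_t(x−z) ≤ a⁻¹ · exp(−‖z‖²/(4t)) · D(x). -/

import Mathlib

open MeasureTheory

/-- The density of the Gaussian distribution `N(0, t I_d)` on `ℝ^d`. -/
noncomputable def gaussDensity (d : ℕ) (t : ℝ) (u : EuclideanSpace ℝ (Fin d)) : ℝ :=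
  (2 * Real.pi * t) ^ (-(d : ℝ) / 2) * Real.exp (-‖u‖ ^ 2 / (2 * t))

/-- far-field bound: for a probability measure `μ` on `ℝ^d`, `t > 0`,
and `R > 0` with `a := μ({‖z‖ ≤ R}) > 0`, the heat-kernel smoothing
`D(x) = ∫ φ_t(x−z) dμ(z)` satisfies, for all `x, z` with `‖z‖ > 4(‖x‖ + R)`,
`φ_t(x−z) ≤ a⁻¹ exp(−‖z‖²/(4t)) D(x)`. -/
theorem stmt6 (d : ℕ) (μ : Measure (EuclideanSpace ℝ (Fin d))) [IsProbabilityMeasure μ]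
    (t : ℝ) (ht : 0 < t) (R : ℝ) (hR : 0 < R)
    (a : ℝ) (ha_def : a = (μ {z | ‖z‖ ≤ R}).toReal) (ha : 0 < a)
    (D : EuclideanSpace ℝ (Fin d) → ℝ)
    (hD : D = fun x => ∫ z, gaussDensity d t (x - z) ∂μ) :
    ∀ x z : EuclideanSpace ℝ (Fin d), ‖z‖ > 4 * (‖x‖ + R) →
      gaussDensity d t (x - z) ≤ a⁻¹ * Real.exp (-‖z‖ ^ 2 / (4 * t)) * D x := by
  intro x z hz
  set C : ℝ := (2 * Real.pi * t) ^ (-(d : ℝ) / 2) with hC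
  have hCpos : 0 < C := by
    apply Real.rpow_pos_of_pos
    positivity
  set S : Set (EuclideanSpace ℝ (Fin d)) := {y | ‖y‖ ≤ R} with hS
  have hSmeas : MeasurableSet S := by
    have : S = Metric.closedBall 0 R := by
      ext y; simp [hS, Metric.mem_closedBall, dist_zero_right]
    rw [this]; exact measurableSet_closedBall
  set c : ℝ := gaussDensity d t (x - z) * Real.exp (‖z‖ ^ 2 / (4 * t)) with hc
  -- pointwise lower bound on S
  have key : ∀ y ∈ S, c ≤ gaussDensity d t (x - y) := by
    intro y hy
    have hy' : ‖y‖ ≤ R := hy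
    have h1 : ‖x - y‖ ≤ ‖x‖ + R := le_trans (norm_sub_le x y) (by linarith)
    have h2 : ‖z‖ - ‖x‖ ≤ ‖x - z‖ := by
      have := norm_sub_norm_le z x
      have : ‖z - x‖ = ‖x - z‖ := norm_sub_rev z x
      linarith [norm_sub_norm_le z x, this]
    have hn1 : 0 ≤ ‖x - y‖ := norm_nonneg _
    have hn2 : 0 ≤ ‖x‖ := norm_nonneg _
    have hsq : ‖x - y‖ ^ 2 + ‖z‖ ^ 2 / 2 ≤ ‖x - z‖ ^ 2 := by
      nlinarith [norm_nonneg (x - z), norm_nonneg z]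
    simp only [gaussDensity, hc, hC]
    rw [mul_assoc, ← Real.exp_add]
    apply mul_le_mul_of_nonneg_left _ (le_of_lt hCpos)
    apply Real.exp_le_exp.mpr
    rw [div_add_div _ _ (by positivity : (2*t) ≠ 0) (by positivity : (4*t) ≠ 0)]
    rw [div_le_div_iff₀ (by positivity) (by positivity)]
    ring_nf
    nlinarith [hsq, ht]
  -- integrability
  have hcont : Continuous fun y : EuclideanSpace ℝ (Fin d) => gaussDensity d t (x - y) := by
    unfold gaussDensity
    fun_prop
  have hint : Integrable (fun y => gaussDensity d t (x - y)) μ := by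
    apply Integrable.mono' (integrable_const C) hcont.aestronglyMeasurable
    filter_upwards with y
    rw [Real.norm_eq_abs, abs_of_nonneg (by unfold gaussDensity; positivity)]
    unfold gaussDensity
    have : Real.exp (-‖x - y‖ ^ 2 / (2 * t)) ≤ 1 := by
      apply Real.exp_le_one_iff.mpr
      rw [neg_div]
      have : 0 ≤ ‖x - y‖ ^ 2 / (2 * t) := by positivity
      linarith
    nlinarith [hCpos]
  have hnonneg : ∀ y, 0 ≤ gaussDensity d t (x - y) := by
    intro y; unfold gaussDensity; positivity
  -- a * c ≤ ∫ over S ≤ D x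
  have h1 : a * c ≤ ∫ y in S, gaussDensity d t (x - y) ∂μ := by
    rw [ha_def]
    have := setIntegral_ge_of_const_le_real hSmeas (measure_ne_top μ S) key
      (hint.integrableOn)
    simp only [Measure.real] at this
    linarith [this]
  have h2 : (∫ y in S, gaussDensity d t (x - y) ∂μ) ≤ D x := by
    rw [hD]
    exact setIntegral_le_integral hint (Filter.Eventually.of_forall hnonneg)
  have hac : a * c ≤ D x := le_trans h1 h2
  have hepos : (0:ℝ) < Real.exp (-‖z‖ ^ 2 / (4 * t)) := Real.exp_pos _
  have ha' : a ≠ 0 := ne_of_gt ha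
  have h3 : Real.exp (-‖z‖ ^ 2 / (4 * t)) * Real.exp (‖z‖ ^ 2 / (4 * t)) = 1 := by
    rw [← Real.exp_add, neg_div]
    norm_num
  have heq : a⁻¹ * Real.exp (-‖z‖ ^ 2 / (4 * t)) *
      (a * (gaussDensity d t (x - z) * Real.exp (‖z‖ ^ 2 / (4 * t)))) =
      gaussDensity d t (x - z) := by
    calc a⁻¹ * Real.exp (-‖z‖ ^ 2 / (4 * t)) *
        (a * (gaussDensity d t (x - z) * Real.exp (‖z‖ ^ 2 / (4 * t))))
        = (a⁻¹ * a) * ((Real.exp (-‖z‖ ^ 2 / (4 * t)) * Real.exp (‖z‖ ^ 2 / (4 * t))) *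
            gaussDensity d t (x - z)) := by ring
      _ = gaussDensity d t (x - z) := by rw [inv_mul_cancel₀ ha', h3, one_mul, one_mul]
  have hnn : 0 ≤ a⁻¹ * Real.exp (-‖z‖ ^ 2 / (4 * t)) := by positivity
  calc gaussDensity d t (x - z)
      = a⁻¹ * Real.exp (-‖z‖ ^ 2 / (4 * t)) * (a * c) := heq.symm
    _ ≤ a⁻¹ * Real.exp (-‖z‖ ^ 2 / (4 * t)) * D x := by
        apply mul_le_mul_of_nonneg_left hac hnn
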